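/- Let ρ : ℝ^N × ℝ → ℝ be convex and positively homogeneous of degree 1, and suppose the restriction of ρ to the hyperplane H = ℝ^N × {0} is a linear form, i.e. ρ(z, 0) = e*(z) for some linear form e* on ℝ^N. Then there exist real constants c and d such that ρ(z, λ) = e*(z) + cλ for all z ∈ ℝ^N and λ ≥ 0, and ρ(z, λ) = e*(z) + dλ for all z ∈ ℝ^N and λ ≤ 0. -/
import Mathlib


/-- Let `ρ : ℝ^N × ℝ → ℝ` be convex and positively homogeneous of
degree 1, whose restriction to the hyperplane `ℝ^N × {0}` equals a linear form `e*`.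
Then there are constants `c`, `d` with `ρ(z, λ) = e*(z) + cλ` for `λ ≥ 0` and
`ρ(z, λ) = e*(z) + dλ` for `λ ≤ 0`. -/
theorem affine_structure_on_half_spaces
    (N : ℕ) (ρ : (Fin N → ℝ) × ℝ → ℝ)
    (hconv : ConvexOn ℝ Set.univ ρ)
    (hhom : ∀ v : (Fin N → ℝ) × ℝ, ∀ l : ℝ, 0 < l → ρ (l • v) = l * ρ v)
    (e : (Fin N → ℝ) →ₗ[ℝ] ℝ)
    (hrest : ∀ z : Fin N → ℝ, ρ (z, 0) = e z) :
    ∃ c d : ℝ,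
      (∀ z : Fin N → ℝ, ∀ l : ℝ, 0 ≤ l → ρ (z, l) = e z + c * l) ∧
      (∀ z : Fin N → ℝ, ∀ l : ℝ, l ≤ 0 → ρ (z, l) = e z + d * l) := by
  -- subadditivity
  have subadd : ∀ u v : (Fin N → ℝ) × ℝ, ρ (u + v) ≤ ρ u + ρ v := by
    intro u v
    have h := hconv.2 (Set.mem_univ u) (Set.mem_univ v)
      (by norm_num : (0:ℝ) ≤ 1/2) (by norm_num : (0:ℝ) ≤ 1/2) (by norm_num)
    have h2 : u + v = (2:ℝ) • ((1/2:ℝ) • u + (1/2:ℝ) • v) := by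
      rw [smul_add, smul_smul, smul_smul]; norm_num
    have h3 : ρ (u + v) = 2 * ρ ((1/2:ℝ) • u + (1/2:ℝ) • v) := by
      rw [h2]; exact hhom _ 2 (by norm_num)
    simp only [smul_eq_mul] at h
    linarith
  have key : ∀ (z : Fin N → ℝ) (t : ℝ), ρ (z, t) = e z + ρ (0, t) := by
    intro z t
    have hle : ρ (z, t) ≤ e z + ρ (0, t) := by
      have := subadd (z, 0) (0, t)
      simpa [Prod.mk_add_mk, hrest] using this
    have hge : ρ (0, t) ≤ - e z + ρ (z, t) := by
      have := subadd (-z, 0) (z, t)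
      have hz : ρ (-z, 0) = - e z := by rw [hrest]; simp
      simpa [Prod.mk_add_mk, hz] using this
    linarith
  refine ⟨ρ (0, 1), - ρ (0, -1), ?_, ?_⟩
  · intro z l hl
    rcases eq_or_lt_of_le hl with h | h
    · simp [← h, hrest]
    · have h1 : ((z, l) : (Fin N → ℝ) × ℝ) = l • ((l⁻¹ • z : Fin N → ℝ), (1:ℝ)) := by
        rw [Prod.smul_mk, smul_smul, mul_inv_cancel₀ h.ne', one_smul]
        simp
      rw [h1, hhom _ l h, key, map_smul, smul_eq_mul, mul_add, ← mul_assoc,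
        mul_inv_cancel₀ h.ne', one_mul]
      ring
  · intro z l hl
    rcases eq_or_lt_of_le hl with h | h
    · simp [h, hrest]
    · have h1 : ((z, l) : (Fin N → ℝ) × ℝ) = (-l) • (((-l)⁻¹ • z : Fin N → ℝ), (-1:ℝ)) := by
        rw [Prod.smul_mk, smul_smul, mul_inv_cancel₀ (by linarith : (-l) ≠ 0), one_smul]
        simp
      rw [h1, hhom _ (-l) (by linarith), key, map_smul, smul_eq_mul, mul_add, ← mul_assoc,
        mul_inv_cancel₀ (by linarith : (-l) ≠ 0), one_mul]
      ring
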